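/- (Bias under exact segmentation.) In the setting of the exact-segmentation KKT conditions for 1D TV (jump locations N_{•0} < … < N_{•L}, piece sizes N_l, signs s₀ = s_L = 0 and s₁,…,s_{L−1} ∈ {−1,+1}), suppose the jump signs alternate, s_l = −s_{l−1} for l = 2,…,L−1, and the TV estimate f̂_λ(y) achieves exact segmentation at λ > 0 with piece values ĥ_l. Then the fitted level on each piece is biased away from the piece mean by |ĥ_l − ȳ_l| = 2λ/N_l for every interior piece 2 ≤ l ≤ L−1, and by |ĥ_l − ȳ_l| = λ/N_l for the boundary pieces l ∈ {1, L}. -/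
import Mathlib


open Matrix

/-- The total variation objective `F(f) = (1/2)‖y − f‖₂² + λ‖Bf‖₁`. -/
noncomputable def tvF {P M : ℕ} (B : Matrix (Fin P) (Fin M) ℝ) (lam : ℝ)
    (y f : Fin M → ℝ) : ℝ :=
  (1 / 2) * ∑ i, (y i - f i) ^ 2 + lam * ∑ j, |B.mulVec f j|

/-- The `(N−1)×N` finite-difference matrix of dimension one:
row `i` has `+1` in column `i` and `−1` in column `i+1`. -/
def oneDiff (N : ℕ) : Matrix (Fin (N - 1)) (Fin N) ℝ :=
  fun i j => if (j : ℕ) = (i : ℕ) then 1 else if (j : ℕ) = (i : ℕ) + 1 then -1 else 0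

/-- The mean of `y` over the `l`-th piece (0-based indices `Nb (l−1) ≤ j < Nb l`). -/
noncomputable def pieceMean {N : ℕ} (y : Fin N → ℝ) (Nb : ℕ → ℕ) (l : ℕ) : ℝ :=
  (∑ j : Fin N, if Nb (l - 1) ≤ (j : ℕ) ∧ (j : ℕ) < Nb l then y j else 0) /
    ((Nb l - Nb (l - 1) : ℕ) : ℝ)


lemma abs_add_sign (x t : ℝ) (hx : x ≠ 0) (ht : |t| ≤ |x|) :
    |x + t| = |x| + Real.sign x * t := by
  rcases hx.lt_or_gt with h|h
  · obtain ⟨h1, h2⟩ := abs_le.mp ht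
    rw [Real.sign_of_neg h, abs_of_neg h] at *
    rw [abs_of_nonpos (by linarith)]
    ring
  · obtain ⟨h1, h2⟩ := abs_le.mp ht
    rw [Real.sign_of_pos h, abs_of_pos h] at *
    rw [abs_of_nonneg (by linarith)]
    ring

lemma quad_min (A K ε : ℝ) (hA : 0 ≤ A) (hε : 0 < ε)
    (h : ∀ t : ℝ, |t| ≤ ε → 0 ≤ A * t ^ 2 + K * t) : K = 0 := by
  rcases lt_trichotomy K 0 with hK | hK | hK
  · exfalso
    set t := min ε (-K / (A + 1)) with ht
    have ht0 : 0 < t := lt_min hε (div_pos (by linarith) (by linarith))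
    have h1 := h t (by rw [abs_of_pos ht0]; exact min_le_left _ _)
    have h2 : t ≤ -K / (A + 1) := min_le_right _ _
    have h3 : t * (A + 1) ≤ -K := (le_div_iff₀ (by linarith)).mp h2
    nlinarith [mul_pos ht0 ht0]
  · exact hK
  · exfalso
    set t := min ε (K / (A + 1)) with ht
    have ht0 : 0 < t := lt_min hε (div_pos (by linarith) (by linarith))
    have h1 := h (-t) (by rw [abs_neg, abs_of_pos ht0]; exact min_le_left _ _)
    have h2 : t ≤ K / (A + 1) := min_le_right _ _
    have h3 : t * (A + 1) ≤ K := (le_div_iff₀ (by linarith)).mp h2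
    nlinarith [mul_pos ht0 ht0]

lemma mulVec_oneDiff {N : ℕ} (g : Fin N → ℝ) (j : Fin (N-1))
    (h1 : (j:ℕ) < N) (h2 : (j:ℕ)+1 < N) :
    (oneDiff N).mulVec g j = g ⟨j, h1⟩ - g ⟨(j:ℕ)+1, h2⟩ := by
  have key : ∀ k : Fin N, oneDiff N j k * g k
      = (if k = ⟨(j:ℕ), h1⟩ then g k else 0) + (if k = ⟨(j:ℕ)+1, h2⟩ then -(g k) else 0) := by
    intro k
    simp only [oneDiff, Fin.ext_iff]
    by_cases hk : (k:ℕ) = (j:ℕ)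
    · rw [if_pos hk, if_pos hk, if_neg (by omega)]; ring
    · by_cases hk2 : (k:ℕ) = (j:ℕ)+1
      · rw [if_neg hk, if_pos hk2, if_neg hk, if_pos hk2]; ring
      · rw [if_neg hk, if_neg hk2, if_neg hk, if_neg hk2]; ring
  rw [Matrix.mulVec, dotProduct]
  rw [Finset.sum_congr rfl fun k _ => key k, Finset.sum_add_distrib,
    Finset.sum_ite_eq' Finset.univ (⟨(j:ℕ), h1⟩ : Fin N) g,
    Finset.sum_ite_eq' Finset.univ (⟨(j:ℕ)+1, h2⟩ : Fin N) (fun k => -(g k))]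
  simp
  ring

lemma sign_pm_ne {x s : ℝ} (hsgn : Real.sign x = s) (hpm : s = 1 ∨ s = -1) : x ≠ 0 := by
  intro h
  rw [h, Real.sign_zero] at hsgn
  rcases hpm with h|h <;> rw [← hsgn] at h <;> norm_num at h

lemma kkt (N L : ℕ) (hN : 2 ≤ N) (hL : 2 ≤ L)
    (y : Fin N → ℝ) (lam : ℝ) (hlam : 0 < lam)
    (Nb : ℕ → ℕ) (hNb0 : Nb 0 = 0) (hNbL : Nb L = N)
    (hNbmono : ∀ l, l < L → Nb l < Nb (l + 1))
    (s : ℕ → ℝ) (hs0 : s 0 = 0) (hsL : s L = 0)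
    (hs : ∀ l, 1 ≤ l → l ≤ L - 1 → s l = 1 ∨ s l = -1)
    (hhat : ℕ → ℝ) (fhat : Fin N → ℝ)
    (hmin : ∀ f, tvF (oneDiff N) lam y fhat ≤ tvF (oneDiff N) lam y f)
    (hseg : ∀ l, 1 ≤ l → l ≤ L → ∀ j : Fin N, Nb (l - 1) ≤ (j : ℕ) → (j : ℕ) < Nb l → fhat j = hhat l)
    (hsign : ∀ l, 1 ≤ l → l ≤ L - 1 → Real.sign (hhat (l + 1) - hhat l) = s l)
    (l : ℕ) (hl1 : 1 ≤ l) (hl2 : l ≤ L) :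
    ((Nb l - Nb (l-1) : ℕ) : ℝ) * hhat l
      - (∑ j : Fin N, if Nb (l-1) ≤ (j:ℕ) ∧ (j:ℕ) < Nb l then y j else 0)
      + lam * s (l-1) - lam * s l = 0 := by
  classical
  have hmonoS : ∀ j, j ≤ L → ∀ i, i < j → Nb i < Nb j := by
    intro j
    induction j with
    | zero => omega
    | succ k ih =>
      intro hjL i hij
      rcases Nat.lt_succ_iff_lt_or_eq.mp hij with h|h
      · exact (ih (by omega) i h).trans (hNbmono k (by omega))
      · subst h; exact hNbmono i (by omega)
  set a := Nb (l-1) with ha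
  set b := Nb l with hb
  have hab : a < b := by
    have := hNbmono (l-1) (by omega); rwa [show l-1+1 = l by omega] at this
  have hbN : b ≤ N := by
    rcases eq_or_lt_of_le hl2 with h|h
    · rw [hb, h, hNbL]
    · exact le_of_lt (hNbL ▸ hmonoS L le_rfl l h)
  have haN : a < N := lt_of_lt_of_le hab hbN
  have h2l : 2 ≤ l → 0 < a := by
    intro h2
    have := hmonoS (l-1) (by omega) 0 (by omega)
    omega
  have h2l' : 0 < a → 2 ≤ l := by
    intro h0; by_contra hcon
    have hl1' : l = 1 := by omega
    rw [ha, hl1'] at h0; simp [hNb0] at h0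
  have hlL : b < N → l < L := by
    intro hbn; by_contra hcon
    have : l = L := by omega
    rw [hb, this, hNbL] at hbn; omega
  have hlL' : l < L → b < N := by
    intro h; rw [hb, ← hNbL]; exact hmonoS L le_rfl l h
  set e : Fin N → ℝ := fun j => if a ≤ (j:ℕ) ∧ (j:ℕ) < b then 1 else 0 with he
  set A : ℝ := ((b - a : ℕ) : ℝ) with hAdef
  set S : ℝ := ∑ j : Fin N, if a ≤ (j:ℕ) ∧ (j:ℕ) < b then y j else 0 with hSdef
  set K : ℝ := A * hhat l - S + lam * s (l-1) - lam * s l with hKdef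
  -- basic sums
  have hsum_e : ∑ j : Fin N, e j = A := by
    rw [he, hAdef]
    rw [Fin.sum_univ_eq_sum_range (fun j => if a ≤ j ∧ j < b then (1:ℝ) else 0) N]
    rw [Finset.sum_boole]
    congr 1
    rw [show (Finset.range N).filter (fun j => a ≤ j ∧ j < b) = Finset.Ico a b by
      ext k; simp [Finset.mem_Ico]; omega]
    rw [Nat.card_Ico]
  have hsum_ey : ∑ j : Fin N, e j * y j = S := by
    rw [hSdef]
    apply Finset.sum_congr rfl
    intro j _
    simp only [he]
    split <;> simp
  have hsum_ef : ∑ j : Fin N, e j * fhat j = A * hhat l := by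
    have : ∀ j : Fin N, e j * fhat j = hhat l * e j := by
      intro j
      simp only [he]
      split_ifs with hcond
      · rw [hseg l hl1 hl2 j hcond.1 hcond.2]; ring
      · ring
    rw [Finset.sum_congr rfl fun j _ => this j, ← Finset.mul_sum, hsum_e]
    ring
  -- sign facts
  set c : ℝ := hhat (l-1) - hhat l with hcdef
  set d : ℝ := hhat l - hhat (l+1) with hddef
  have hsc : 0 < a → Real.sign (hhat l - hhat (l-1)) = s (l-1) ∧ (s (l-1) = 1 ∨ s (l-1) = -1) := by
    intro h0
    have h2 := h2l' h0
    constructor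
    · have := hsign (l-1) (by omega) (by omega)
      rwa [show l-1+1 = l by omega] at this
    · exact hs (l-1) (by omega) (by omega)
  have hsd : b < N → Real.sign (hhat (l+1) - hhat l) = s l ∧ (s l = 1 ∨ s l = -1) := by
    intro hbn
    have hlt := hlL hbn
    exact ⟨hsign l hl1 (by omega), hs l hl1 (by omega)⟩
  have hcne : 0 < a → c ≠ 0 := by
    intro h0
    have := hsc h0
    have hne := sign_pm_ne this.1 this.2
    rw [hcdef]; intro hx; apply hne; linarith
  have hdne : b < N → d ≠ 0 := by
    intro h0
    have := hsd h0
    have hne := sign_pm_ne this.1 this.2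
    rw [hddef]; intro hx; apply hne; linarith
  set ε : ℝ := min (if 0 < a then |c| else 1) (if b < N then |d| else 1) with hεdef
  have hε : 0 < ε := by
    apply lt_min
    · split_ifs with h
      · exact abs_pos.mpr (hcne h)
      · norm_num
    · split_ifs with h
      · exact abs_pos.mpr (hdne h)
      · norm_num
  have hεc : 0 < a → ε ≤ |c| := fun h0 => (min_le_left _ _).trans_eq (if_pos h0)
  have hεd : b < N → ε ≤ |d| := fun h0 => (min_le_right _ _).trans_eq (if_pos h0)
  -- key inequality
  have hKey : ∀ t : ℝ, |t| ≤ ε → 0 ≤ (A/2) * t ^ 2 + K * t := by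
    intro t ht
    have hQ : ∑ i, (y i - (fhat i + t * e i)) ^ 2
        = (∑ i, (y i - fhat i) ^ 2) - 2*t*S + 2*t*(A * hhat l) + t^2 * A := by
      have hper : ∀ i : Fin N, (y i - (fhat i + t * e i)) ^ 2
          = (y i - fhat i)^2 - 2*t*(e i * y i) + 2*t*(e i * fhat i) + t^2 * e i := by
        intro i
        have : e i = 0 ∨ e i = 1 := by simp only [he]; split <;> simp
        rcases this with h|h <;> rw [h] <;> ring
      rw [Finset.sum_congr rfl fun i _ => hper i]
      rw [Finset.sum_add_distrib, Finset.sum_add_distrib, Finset.sum_sub_distrib,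
        ← Finset.mul_sum, ← Finset.mul_sum, ← Finset.mul_sum, hsum_e, hsum_ey, hsum_ef]
    have hterm : ∀ j : Fin (N-1),
        |(oneDiff N).mulVec (fun i => fhat i + t * e i) j|
          = |(oneDiff N).mulVec fhat j|
            + (if (j:ℕ)+1 = a then s (l-1) * t else 0)
            + (if (j:ℕ)+1 = b then -(s l) * t else 0) := by
      intro j
      have hjlt := j.isLt
      have hj1 : (j:ℕ) < N := by omega
      have hj2 : (j:ℕ)+1 < N := by omega
      rw [mulVec_oneDiff (fun i => fhat i + t * e i) j hj1 hj2, mulVec_oneDiff fhat j hj1 hj2]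
      by_cases hja : (j:ℕ)+1 = a
      · have h0 : 0 < a := by omega
        have h2 := h2l' h0
        have he0 : e ⟨(j:ℕ), hj1⟩ = 0 := by
          simp only [he]; rw [if_neg]; simp only [not_and]; omega
        have he1 : e ⟨(j:ℕ)+1, hj2⟩ = 1 := by
          simp only [he]; rw [if_pos ⟨by omega, by omega⟩]
        have hfj0 : fhat ⟨(j:ℕ), hj1⟩ = hhat (l-1) := by
          apply hseg (l-1) (by omega) (by omega)
          · show Nb (l-1-1) ≤ (j:ℕ)
            have := hNbmono (l-2) (by omega)
            rw [show l-2+1 = l-1 by omega] at this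
            rw [show l-1-1 = l-2 by omega]
            omega
          · show (j:ℕ) < Nb (l-1); omega
        have hfj1 : fhat ⟨(j:ℕ)+1, hj2⟩ = hhat l := by
          apply hseg l hl1 hl2
          · show Nb (l-1) ≤ (j:ℕ)+1; omega
          · show (j:ℕ)+1 < Nb l; omega
        have hsgn := (hsc h0).1
        have hne : c ≠ 0 := hcne h0
        have hsgn' : Real.sign c = - s (l-1) := by
          rw [show c = -(hhat l - hhat (l-1)) by rw [hcdef]; ring, Real.sign_neg, hsgn]
        have habs := abs_add_sign c (-t) hne (by rw [abs_neg]; exact ht.trans (hεc h0))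
        simp only [he0, he1, hfj0, hfj1]
        rw [if_pos hja, if_neg (by omega)]
        rw [show hhat (l-1) + t*0 - (hhat l + t*1) = c + (-t) by rw [hcdef]; ring,
          habs, hsgn', hcdef]
        ring
      · by_cases hjb : (j:ℕ)+1 = b
        · have hbn : b < N := by omega
          have hltL := hlL hbn
          have he0 : e ⟨(j:ℕ), hj1⟩ = 1 := by
            simp only [he]; rw [if_pos ⟨by omega, by omega⟩]
          have he1 : e ⟨(j:ℕ)+1, hj2⟩ = 0 := by
            simp only [he]; rw [if_neg]; simp only [not_and]; omega
          have hfj0 : fhat ⟨(j:ℕ), hj1⟩ = hhat l := by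
            apply hseg l hl1 hl2
            · show Nb (l-1) ≤ (j:ℕ); omega
            · show (j:ℕ) < Nb l; omega
          have hfj1 : fhat ⟨(j:ℕ)+1, hj2⟩ = hhat (l+1) := by
            apply hseg (l+1) (by omega) (by omega)
            · show Nb (l+1-1) ≤ (j:ℕ)+1
              rw [show l+1-1 = l by omega]; omega
            · show (j:ℕ)+1 < Nb (l+1)
              have := hNbmono l (by omega); omega
          have hsgn := (hsd hbn).1
          have hne : d ≠ 0 := hdne hbn
          have hsgn' : Real.sign d = - s l := by
            rw [show d = -(hhat (l+1) - hhat l) by rw [hddef]; ring, Real.sign_neg, hsgn]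
          have habs := abs_add_sign d t hne (ht.trans (hεd hbn))
          simp only [he0, he1, hfj0, hfj1]
          rw [if_neg hja, if_pos hjb]
          rw [show hhat l + t*1 - (hhat (l+1) + t*0) = d + t by rw [hddef]; ring,
            habs, hsgn', hddef]
          ring
        · have hee : e ⟨(j:ℕ), hj1⟩ = e ⟨(j:ℕ)+1, hj2⟩ := by
            simp only [he]
            by_cases h : a ≤ (j:ℕ) ∧ (j:ℕ) < b
            · rw [if_pos h, if_pos ⟨by omega, by omega⟩]
            · rw [if_neg h, if_neg (by simp only [not_and] at h ⊢; omega)]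
          rw [if_neg hja, if_neg hjb, hee,
            show fhat ⟨(j:ℕ), hj1⟩ + t * e ⟨(j:ℕ)+1, hj2⟩ - (fhat ⟨(j:ℕ)+1, hj2⟩ + t * e ⟨(j:ℕ)+1, hj2⟩)
              = fhat ⟨(j:ℕ), hj1⟩ - fhat ⟨(j:ℕ)+1, hj2⟩ by ring]
          ring
    have hsum1 : ∑ j : Fin (N-1), (if (j:ℕ)+1 = a then s (l-1) * t else 0) = s (l-1) * t := by
      by_cases h0 : 0 < a
      · rw [Finset.sum_eq_single (⟨a-1, by omega⟩ : Fin (N-1))]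
        · rw [if_pos (by simp; omega)]
        · intro j _ hne
          rw [if_neg]
          intro hc
          exact hne (Fin.ext (by simp; omega))
        · intro h; exact absurd (Finset.mem_univ _) h
      · have hl1' : l = 1 := by
          by_contra hcon
          exact h0 (h2l (by omega))
        rw [Finset.sum_eq_zero fun j _ => if_neg (by omega),
          show l - 1 = 0 by omega, hs0]
        ring
    have hsum2 : ∑ j : Fin (N-1), (if (j:ℕ)+1 = b then -(s l) * t else 0) = -(s l) * t := by
      by_cases h0 : b < N
      · rw [Finset.sum_eq_single (⟨b-1, by omega⟩ : Fin (N-1))]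
        · rw [if_pos (by simp; omega)]
        · intro j _ hne
          rw [if_neg]
          intro hc
          exact hne (Fin.ext (by simp; omega))
        · intro h; exact absurd (Finset.mem_univ _) h
      · have hlL2 : l = L := by
          by_contra hcon
          exact h0 (hlL' (by omega))
        rw [Finset.sum_eq_zero fun j _ => if_neg (by have := j.isLt; omega),
          hlL2, hsL]
        ring
    have hT : ∑ j : Fin (N-1), |(oneDiff N).mulVec (fun i => fhat i + t * e i) j|
        = (∑ j : Fin (N-1), |(oneDiff N).mulVec fhat j|) + s (l-1) * t + (-(s l) * t) := by
      rw [Finset.sum_congr rfl fun j _ => hterm j, Finset.sum_add_distrib,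
        Finset.sum_add_distrib, hsum1, hsum2]
    have hmin' := hmin (fun i => fhat i + t * e i)
    unfold tvF at hmin'
    rw [hQ, hT] at hmin'
    rw [hKdef]
    nlinarith [hmin']
  have hK0 := quad_min (A/2) K ε (by positivity) hε hKey
  rw [hKdef] at hK0
  exact hK0
/-- bias under exact segmentation: if the jump signs alternate and the TV
estimate achieves exact segmentation at `λ > 0` with piece values `ĥ_l`, then the fitted
level on each interior piece is biased away from the piece mean by `2λ/N_l`, and on each
boundary piece by `λ/N_l`. -/
theorem tv_exact_segmentation_bias
    (N L : ℕ) (hN : 2 ≤ N) (hL : 2 ≤ L)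
    (y : Fin N → ℝ) (lam : ℝ) (hlam : 0 < lam)
    (Nb : ℕ → ℕ) (hNb0 : Nb 0 = 0) (hNbL : Nb L = N)
    (hNbmono : ∀ l, l < L → Nb l < Nb (l + 1))
    (s : ℕ → ℝ) (hs0 : s 0 = 0) (hsL : s L = 0)
    (hs : ∀ l, 1 ≤ l → l ≤ L - 1 → s l = 1 ∨ s l = -1)
    (halt : ∀ l, 2 ≤ l → l ≤ L - 1 → s l = -s (l - 1))
    (hhat : ℕ → ℝ)
    (hES : ∃ fhat : Fin N → ℝ,
      (∀ f : Fin N → ℝ, tvF (oneDiff N) lam y fhat ≤ tvF (oneDiff N) lam y f) ∧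
      (∀ l, 1 ≤ l → l ≤ L →
        ∀ j : Fin N, Nb (l - 1) ≤ (j : ℕ) → (j : ℕ) < Nb l → fhat j = hhat l) ∧
      (∀ l, 1 ≤ l → l ≤ L - 1 → Real.sign (hhat (l + 1) - hhat l) = s l)) :
    (∀ l, 2 ≤ l → l ≤ L - 1 →
      |hhat l - pieceMean y Nb l| = 2 * lam / ((Nb l - Nb (l - 1) : ℕ) : ℝ)) ∧
    |hhat 1 - pieceMean y Nb 1| = lam / ((Nb 1 - Nb 0 : ℕ) : ℝ) ∧
    |hhat L - pieceMean y Nb L| = lam / ((Nb L - Nb (L - 1) : ℕ) : ℝ) := by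
  obtain ⟨fhat, hmin, hseg, hsign⟩ := hES
  -- the general bias identity on each piece
  have key : ∀ l, 1 ≤ l → l ≤ L →
      hhat l - pieceMean y Nb l = lam * (s l - s (l - 1)) / ((Nb l - Nb (l-1) : ℕ) : ℝ) := by
    intro l hl1 hl2
    have hkkt := kkt N L hN hL y lam hlam Nb hNb0 hNbL hNbmono s hs0 hsL hs hhat fhat
      hmin hseg hsign l hl1 hl2
    have hab : Nb (l-1) < Nb l := by
      have := hNbmono (l-1) (by omega); rwa [show l-1+1 = l by omega] at this
    have hA : (0:ℝ) < ((Nb l - Nb (l-1) : ℕ) : ℝ) := by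
      have : 0 < Nb l - Nb (l-1) := by omega
      exact_mod_cast this
    rw [pieceMean]
    field_simp
    linarith [hkkt]
  have habs : ∀ l, 1 ≤ l → l ≤ L →
      |hhat l - pieceMean y Nb l| = lam * |s l - s (l - 1)| / ((Nb l - Nb (l-1) : ℕ) : ℝ) := by
    intro l hl1 hl2
    have hab : Nb (l-1) < Nb l := by
      have := hNbmono (l-1) (by omega); rwa [show l-1+1 = l by omega] at this
    have hA : (0:ℝ) < ((Nb l - Nb (l-1) : ℕ) : ℝ) := by
      have : 0 < Nb l - Nb (l-1) := by omega
      exact_mod_cast this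
    rw [key l hl1 hl2, abs_div, abs_of_pos hA, abs_mul, abs_of_pos hlam]
  refine ⟨?_, ?_, ?_⟩
  · intro l hl2 hlL
    rw [habs l (by omega) (by omega)]
    have h1 : s (l-1) = -s l := by linarith [halt l hl2 hlL]
    rcases hs l (by omega) hlL with h|h <;> rw [h1, h] <;> norm_num <;> ring
  · rw [habs 1 le_rfl (by omega)]
    rcases hs 1 le_rfl (by omega) with h|h <;>
      rw [show (1:ℕ) - 1 = 0 from rfl, h, hs0] <;> norm_num
  · rw [habs L (by omega) le_rfl]
    rcases hs (L-1) (by omega) le_rfl with h|h <;> rw [hsL, h] <;> norm_num
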